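/- Let M_k(𝕂) ⊆ M_n(ℂ) be a real form of M_n(ℂ) (𝕂 = ℝ, ℂ, or ℍ) and let α be a *-automorphism of M_k(𝕂) with α² = Id which extends to a ℂ-linear automorphism of M_n(ℂ). Then there exists a self-adjoint unitary γ lying in M_k(𝕂) or in i·M_k(𝕂) such that α(A) = γ A γ for all A ∈ M_k(𝕂). -/

import Mathlib

open Matrix

/-- Skolem–Noether for `M_n(ℂ)`: every `ℂ`-algebra automorphism is implemented by an
invertible matrix. -/

theorem sn_matrix {n : ℕ} (hn : 0 < n)
    (f : Matrix (Fin n) (Fin n) ℂ ≃ₐ[ℂ] Matrix (Fin n) (Fin n) ℂ) :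
    ∃ u : Matrix (Fin n) (Fin n) ℂ, IsUnit u ∧ ∀ x, f x * u = u * x := by
  haveI : NeZero n := ⟨hn.ne'⟩
  set E : Fin n → Fin n → Matrix (Fin n) (Fin n) ℂ := fun i j => Matrix.single i j 1 with hE
  set F : Fin n → Fin n → Matrix (Fin n) (Fin n) ℂ := fun i j => f (E i j) with hF
  have hmulF : ∀ i j k l, F i j * F k l = if j = k then F i l else 0 := by
    intro i j k l
    rw [show F i j * F k l = f (E i j * E k l) from (_root_.map_mul f _ _).symm]
    by_cases h : j = k
    · subst h; simp [hF, hE, Matrix.single_mul_single_same]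
    · simp only [hF, hE, if_neg h]
      rw [Matrix.single_mul_single_of_ne (1 : ℂ) i j k h 1, map_zero]
  have hF00 : F 0 0 ≠ 0 := by
    simp only [hF, hE]
    intro h
    have := f.injective (h.trans (map_zero f).symm)
    have := congrFun (congrFun this 0) 0
    simp [Matrix.single_apply_same] at this
  obtain ⟨p, q, hpq⟩ : ∃ p q, F 0 0 p q ≠ 0 := by
    by_contra h; push_neg at h; exact hF00 (by ext p q; simp [h])
  set w : Fin n → ℂ := (F 0 0) *ᵥ Pi.single q 1 with hw
  have hwne : w ≠ 0 := by
    intro h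
    have := congrFun h p
    simp [hw, mulVec, dotProduct, Pi.single_apply] at this
    exact hpq this
  have hF00w : F 0 0 *ᵥ w = w := by
    rw [hw, mulVec_mulVec, hmulF]
    simp
  set u : Matrix (Fin n) (Fin n) ℂ := Matrix.of (fun i j => (F j 0 *ᵥ w) i) with hu
  have hkey : ∀ i j, F i j * u = u * E i j := by
    intro i j
    ext p r
    have lhs : (F i j * u) p r = ((F i j * F r 0) *ᵥ w) p := by
      simp only [mul_apply, hu, Matrix.of_apply, mulVec, dotProduct, Finset.mul_sum,
        Finset.sum_mul, mul_assoc]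
      rw [Finset.sum_comm]
    rw [lhs, hmulF]
    by_cases h : j = r
    · subst h
      simp [mul_apply, hE, Matrix.single, hu, Finset.sum_ite_eq, mulVec]
    · rw [if_neg h]
      simp [mul_apply, hE, Matrix.single, hu, h]
  have hmain : ∀ x, f x * u = u * x := by
    intro x
    nth_rewrite 2 [matrix_eq_sum_single x]
    conv_lhs => rw [matrix_eq_sum_single x]
    rw [map_sum, Finset.sum_mul, Finset.mul_sum]
    refine Finset.sum_congr rfl fun i _ => ?_
    rw [map_sum, Finset.sum_mul, Finset.mul_sum]
    refine Finset.sum_congr rfl fun j _ => ?_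
    have h1 : Matrix.single i j (x i j) = (x i j) • E i j := by
      simp [hE, smul_single, smul_eq_mul, mul_one]
    rw [h1, _root_.map_smul, smul_mul_assoc, mul_smul_comm, hkey]
  refine ⟨u, ?_, hmain⟩
  rw [Matrix.isUnit_iff_isUnit_det, isUnit_iff_ne_zero]
  intro hdet
  obtain ⟨z, hz, hz0⟩ := (Matrix.exists_mulVec_eq_zero_iff).2 hdet
  apply hz
  ext i
  have hup : ∀ p, u p 0 = w p := fun p => congrFun hF00w p
  have h1 : E 0 i *ᵥ z = Pi.single (0 : Fin n) (z i) := by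
    ext p
    simp only [hE, mulVec, dotProduct, Matrix.single, Matrix.of_apply, Pi.single_apply]
    by_cases hp : p = 0 <;> simp [hp, eq_comm]
  have key : F 0 i *ᵥ (u *ᵥ z) = z i • w := by
    rw [mulVec_mulVec, hkey, ← mulVec_mulVec, h1]
    ext p
    simp [mulVec, dotProduct, Pi.single_apply, hup p, mul_comm]
  rw [hz0] at key
  simp only [mulVec_zero] at key
  rcases (smul_eq_zero.mp key.symm) with h | h
  · simpa using h
  · exact absurd h hwne


lemma central_scalar {n : ℕ} {m : Matrix (Fin n) (Fin n) ℂ}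
    (h : ∀ x, m * x = x * m) : ∃ c : ℂ, m = c • (1 : Matrix (Fin n) (Fin n) ℂ) := by
  obtain ⟨c, hc⟩ := Matrix.mem_range_scalar_of_commute_single
    (M := m) (fun i j _ => (h _).symm)
  refine ⟨c, ?_⟩
  rw [← hc]
  ext i j
  by_cases hij : i = j <;> simp [Matrix.scalar_apply, Matrix.one_apply, hij]

lemma exists_invol {n : ℕ} (hn : 0 < n)
    (f : Matrix (Fin n) (Fin n) ℂ ≃ₐ[ℂ] Matrix (Fin n) (Fin n) ℂ)
    (hstar : ∀ x, f xᴴ = (f x)ᴴ) (hf2 : ∀ x, f (f x) = x) :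
    ∃ γ : Matrix (Fin n) (Fin n) ℂ, γᴴ = γ ∧ γ * γ = 1 ∧ ∀ x, f x = γ * x * γ := by
  haveI : NeZero n := ⟨hn.ne'⟩
  obtain ⟨huu, hcom⟩ := (sn_matrix hn f).choose_spec
  set u := (sn_matrix hn f).choose with hudef
  have hdet : IsUnit u.det := (Matrix.isUnit_iff_isUnit_det u).mp huu
  have hui : u * u⁻¹ = 1 := Matrix.mul_nonsing_inv u hdet
  have hiu : u⁻¹ * u = 1 := Matrix.nonsing_inv_mul u hdet
  have hfx : ∀ x, f x = u * x * u⁻¹ := fun x => by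
    calc f x = f x * (u * u⁻¹) := by rw [hui, mul_one]
    _ = (f x * u) * u⁻¹ := by rw [mul_assoc]
    _ = u * x * u⁻¹ := by rw [hcom]
  have hcentr : ∀ y, (uᴴ * u) * y = y * (uᴴ * u) := by
    intro y
    have h1 := hstar yᴴ
    rw [conjTranspose_conjTranspose, hfx y, hfx yᴴ] at h1
    -- h1 : u * y * u⁻¹ = (u * yᴴ * u⁻¹)ᴴ
    rw [conjTranspose_mul, conjTranspose_mul, conjTranspose_conjTranspose] at h1
    -- h1 : u * y * u⁻¹ = u⁻¹ᴴ * (yᴴᴴ? ...)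
    have h2 := congrArg (fun z => uᴴ * z * u) h1
    calc (uᴴ * u) * y = uᴴ * (u * y * u⁻¹) * u := by
          rw [show uᴴ * (u * y * u⁻¹) * u = uᴴ * u * y * (u⁻¹ * u) from by noncomm_ring, hiu,
            mul_one]
    _ = uᴴ * (u⁻¹ᴴ * (y * uᴴ)) * u := by rw [h1]
    _ = (u⁻¹ * u)ᴴ * (y * (uᴴ * u)) := by
          rw [conjTranspose_mul]; noncomm_ring
    _ = y * (uᴴ * u) := by rw [hiu, conjTranspose_one, one_mul]
  obtain ⟨μ, hμ⟩ := central_scalar hcentr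
  -- μ is a positive real
  set s : ℝ := ∑ k, Complex.normSq (u k 0) with hs
  have hμs : μ = (s : ℂ) := by
    have e1 : (uᴴ * u) 0 0 = (s : ℂ) := by
      simp [mul_apply, conjTranspose_apply, hs, Complex.normSq_eq_conj_mul_self]
    have e2 : ((μ • (1 : Matrix (Fin n) (Fin n) ℂ))) 0 0 = μ := by simp
    rw [hμ, e2] at e1; exact e1
  have hs0 : s ≠ 0 := by
    intro h0
    have : uᴴ * u = 0 := by rw [hμ, hμs, h0]; simp
    have h3 : (1 : Matrix (Fin n) (Fin n) ℂ) = 0 := by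
      calc (1 : Matrix (Fin n) (Fin n) ℂ) = (u * u⁻¹)ᴴ * (u * u⁻¹) := by
            rw [hui]; simp
      _ = u⁻¹ᴴ * (uᴴ * u) * u⁻¹ := by rw [conjTranspose_mul]; noncomm_ring
      _ = 0 := by rw [this]; simp
    have := congrFun (congrFun h3 0) 0
    simp [Matrix.one_apply] at this
  have hspos : 0 < s := lt_of_le_of_ne (Finset.sum_nonneg fun k _ => Complex.normSq_nonneg _) (Ne.symm hs0)
  set r : ℝ := Real.sqrt s with hr
  have hr2 : r * r = s := Real.mul_self_sqrt hspos.le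
  have hrpos : 0 < r := Real.sqrt_pos.mpr hspos
  set u' : Matrix (Fin n) (Fin n) ℂ := ((r⁻¹ : ℝ) : ℂ) • u with hu'
  have h'1 : u'ᴴ * u' = 1 := by
    rw [hu', conjTranspose_smul, smul_mul_assoc, mul_smul_comm, smul_smul, hμ, hμs, smul_smul]
    have hc : (star ((r⁻¹:ℝ):ℂ)) * ((r⁻¹:ℝ):ℂ) * ((s:ℝ):ℂ) = 1 := by
      rw [Complex.star_def, Complex.conj_ofReal]
      rw [show ((r⁻¹:ℝ):ℂ) * ((r⁻¹:ℝ):ℂ) * ((s:ℝ):ℂ) = (((r⁻¹*r⁻¹*s) : ℝ) : ℂ) from by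
        push_cast; ring]
      norm_cast
      rw [← hr2]; field_simp
    rw [hc, one_smul]
  have h'2 : u' * u'ᴴ = 1 := mul_eq_one_comm.mp h'1
  have hcom' : ∀ x, f x * u' = u' * x := fun x => by
    rw [hu', mul_smul_comm, smul_mul_assoc, hcom]
  have hfx' : ∀ x, f x = u' * x * u'ᴴ := fun x => by
    calc f x = f x * (u' * u'ᴴ) := by rw [h'2, mul_one]
    _ = (f x * u') * u'ᴴ := by rw [mul_assoc]
    _ = u' * x * u'ᴴ := by rw [hcom']
  have hsq : ∀ x, (u' * u') * x = x * (u' * u') := by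
    intro x
    have h1 := hf2 x
    rw [hfx' x, hfx' (u' * x * u'ᴴ)] at h1
    -- u' * (u' * x * u'ᴴ) * u'ᴴ = x
    have h2 := congrArg (fun z => z * (u' * u')) h1
    calc (u' * u') * x = u' * (u' * x * u'ᴴ) * u'ᴴ * (u' * u') := by
          rw [show u' * (u' * x * u'ᴴ) * u'ᴴ * (u' * u') =
            (u' * u') * x * (u'ᴴ * (u'ᴴ * u') * u') from by noncomm_ring, h'1,
            mul_one, h'1, mul_one]
    _ = x * (u' * u') := h2
  obtain ⟨lam, hlam⟩ := central_scalar hsq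
  have hlam1 : (starRingEnd ℂ) lam * lam = 1 := by
    have e1 : (u' * u')ᴴ * (u' * u') = 1 := by
      rw [conjTranspose_mul]
      calc u'ᴴ * u'ᴴ * (u' * u') = u'ᴴ * (u'ᴴ * u') * u' := by noncomm_ring
      _ = 1 := by rw [h'1, mul_one, h'1]
    rw [hlam, conjTranspose_smul, conjTranspose_one, smul_mul_assoc, mul_smul_comm,
      smul_smul, one_mul] at e1
    have := congrFun (congrFun e1 0) 0
    simpa [Matrix.one_apply] using this
  set m : ℂ := ((starRingEnd ℂ) lam) ^ (((2:ℕ) : ℂ))⁻¹ with hm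
  have hm2 : m * m = (starRingEnd ℂ) lam := by
    have := Complex.cpow_nat_inv_pow ((starRingEnd ℂ) lam) (n := 2) two_ne_zero
    rw [← this, hm]; ring
  set γ : Matrix (Fin n) (Fin n) ℂ := m • u' with hγ
  have hγ2 : γ * γ = 1 := by
    rw [hγ, smul_mul_assoc, mul_smul_comm, smul_smul, hlam, smul_smul, hm2, hlam1, one_smul]
  have hnormm : (starRingEnd ℂ) m * m = 1 := by
    have h1 : Complex.normSq lam = 1 := by
      have h0 : ((Complex.normSq lam : ℝ) : ℂ) = 1 := by
        rw [Complex.normSq_eq_conj_mul_self, hlam1]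
      exact_mod_cast h0
    have h2 : Complex.normSq m * Complex.normSq m = 1 := by
      rw [← Complex.normSq_mul, hm2, Complex.normSq_conj, h1]
    have h3 : Complex.normSq m = 1 := by nlinarith [Complex.normSq_nonneg m]
    have h4 : ((Complex.normSq m : ℝ) : ℂ) = 1 := by exact_mod_cast h3
    rw [Complex.normSq_eq_conj_mul_self] at h4
    exact h4
  have hγu : γᴴ * γ = 1 := by
    rw [hγ, conjTranspose_smul, smul_mul_assoc, mul_smul_comm, smul_smul, h'1]
    rw [show (star m : ℂ) = (starRingEnd ℂ) m from rfl, hnormm, one_smul]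
  have hγH : γᴴ = γ := by
    calc γᴴ = γᴴ * (γ * γ) := by rw [hγ2, mul_one]
    _ = (γᴴ * γ) * γ := by noncomm_ring
    _ = γ := by rw [hγu, one_mul]
  refine ⟨γ, hγH, hγ2, fun x => ?_⟩
  have : f x * γ = γ * x := by
    rw [hγ, mul_smul_comm, smul_mul_assoc, hcom']
  calc f x = f x * (γ * γ) := by rw [hγ2, mul_one]
  _ = (f x * γ) * γ := by noncomm_ring
  _ = γ * x * γ := by rw [this]

/-- if B ⊆ M_n(ℂ) is a star-closed real form (B + iB = M_n(ℂ),
B ∩ iB = 0) and f is a ℂ-linear algebra automorphism of M_n(ℂ) restricting to a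
*-automorphism of B with f² = Id (an admissible grading), then there is a self-adjoint
unitary γ in B or in i·B implementing f on B by conjugation. -/

theorem stmt_7 (n : ℕ) (B : Subalgebra ℝ (Matrix (Fin n) (Fin n) ℂ))
    (hBstar : ∀ b ∈ B, bᴴ ∈ B)
    (hspan : ∀ x : Matrix (Fin n) (Fin n) ℂ, ∃ b ∈ B, ∃ c ∈ B, x = b + Complex.I • c)
    (hcap : ∀ b ∈ B, Complex.I • b ∈ B → b = 0)
    (f : Matrix (Fin n) (Fin n) ℂ ≃ₐ[ℂ] Matrix (Fin n) (Fin n) ℂ)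
    (hfB : ∀ b ∈ B, f b ∈ B)
    (hfstar : ∀ b ∈ B, f bᴴ = (f b)ᴴ)
    (hf2 : ∀ x, f (f x) = x) :
    ∃ γ : Matrix (Fin n) (Fin n) ℂ,
      γᴴ = γ ∧ γ * γ = 1 ∧ (γ ∈ B ∨ ∃ b ∈ B, γ = Complex.I • b) ∧
      ∀ a ∈ B, f a = γ * a * γ := by
  rcases Nat.eq_zero_or_pos n with hn | hn
  · subst hn
    exact ⟨1, Subsingleton.elim _ _, Subsingleton.elim _ _, Or.inl (one_mem B),
      fun a _ => Subsingleton.elim _ _⟩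
  -- global star preservation
  have hstar : ∀ x, f xᴴ = (f x)ᴴ := by
    intro x
    obtain ⟨b, hb, c, hc, rfl⟩ := hspan x
    have h1 : (b + Complex.I • c)ᴴ = bᴴ + (-Complex.I) • cᴴ := by
      rw [conjTranspose_add, conjTranspose_smul]
      simp [Complex.conj_I]
    rw [h1, map_add, _root_.map_smul, hfstar b hb, hfstar c hc, map_add, _root_.map_smul,
      conjTranspose_add, conjTranspose_smul]
    simp [Complex.conj_I]
  obtain ⟨γ, hγH, hγ2, hγf⟩ := exists_invol hn f hstar hf2
  obtain ⟨b, hb, c, hc, hγbc⟩ := hspan γ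
  -- key computation of γ * a * γ
  have hexp : ∀ a, γ * a * γ = (b*a*b - c*a*c) + Complex.I • (b*a*c + c*a*b) := by
    intro a
    rw [hγbc]
    have : (b + Complex.I • c) * a * (b + Complex.I • c)
        = b*a*b + Complex.I • (b*a*c) + Complex.I • (c*a*b)
          + Complex.I • (Complex.I • (c*a*c)) := by
      simp only [add_mul, mul_add, smul_mul_assoc, mul_smul_comm, smul_add]
      module
    rw [this, smul_smul, Complex.I_mul_I, neg_one_smul, smul_add]
    abel
  -- for a ∈ B : mixed term vanishes and f a = b*a*b - c*a*c
  have hmix : ∀ a ∈ B, (b*a*c + c*a*b = 0) ∧ f a = b*a*b - c*a*c := by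
    intro a ha
    have hP : b*a*b - c*a*c ∈ B := sub_mem (mul_mem (mul_mem hb ha) hb) (mul_mem (mul_mem hc ha) hc)
    have hQ : b*a*c + c*a*b ∈ B := add_mem (mul_mem (mul_mem hb ha) hc) (mul_mem (mul_mem hc ha) hb)
    have heq : f a = (b*a*b - c*a*c) + Complex.I • (b*a*c + c*a*b) := by
      rw [hγf a, hexp a]
    have hIQ : Complex.I • (b*a*c + c*a*b) ∈ B := by
      have : Complex.I • (b*a*c + c*a*b) = f a - (b*a*b - c*a*c) := by
        rw [heq]; abel
      rw [this]
      exact sub_mem (hfB a ha) hP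
    have hQ0 : b*a*c + c*a*b = 0 := hcap _ hQ hIQ
    exact ⟨hQ0, by rw [heq, hQ0, smul_zero, add_zero]⟩
  -- the identity element
  have h1B : (1 : Matrix (Fin n) (Fin n) ℂ) ∈ B := one_mem B
  obtain ⟨hQ1, hP1⟩ := hmix 1 h1B
  rw [_root_.map_one] at hP1
  simp only [mul_one, one_mul] at hQ1 hP1
  -- γ' = b - I c  also squares to 1 and implements f
  set γ' : Matrix (Fin n) (Fin n) ℂ := b - Complex.I • c with hγ'
  have hγ'2 : γ' * γ' = 1 := by
    rw [hγ']
    have : (b - Complex.I • c) * (b - Complex.I • c)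
        = b*b - Complex.I • (b*c + c*b) + Complex.I • (Complex.I • (c*c)) := by
      simp only [sub_mul, mul_sub, smul_mul_assoc, mul_smul_comm, smul_add]
      module
    rw [this, hQ1, smul_zero, smul_smul, Complex.I_mul_I, neg_one_smul,
      show b*b - 0 + -(c*c) = b*b - c*c from by module, ← hP1]
  have hγ'f : ∀ x, γ' * x * γ' = f x := by
    intro x
    obtain ⟨p, hp, q, hq, rfl⟩ := hspan x
    have hexp' : ∀ a ∈ B, γ' * a * γ' = f a := by
      intro a ha
      have : (b - Complex.I • c) * a * (b - Complex.I • c)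
          = b*a*b - Complex.I • (b*a*c) - Complex.I • (c*a*b)
            + Complex.I • (Complex.I • (c*a*c)) := by
        simp only [sub_mul, mul_sub, smul_mul_assoc, mul_smul_comm]
        module
      rw [hγ', this, smul_smul, Complex.I_mul_I, neg_one_smul]
      obtain ⟨hQ0, hfa⟩ := hmix a ha
      have hbac : Complex.I • (b*a*c) + Complex.I • (c*a*b) = 0 := by
        rw [← smul_add, hQ0, smul_zero]
      rw [hfa]
      have : b*a*b - Complex.I • (b*a*c) - Complex.I • (c*a*b) + -(c*a*c)
          = (b*a*b - c*a*c) - (Complex.I • (b*a*c) + Complex.I • (c*a*b)) := by module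
      rw [this, hbac, sub_zero]
    rw [mul_add, add_mul, mul_smul_comm, smul_mul_assoc, map_add, _root_.map_smul,
      hexp' p hp, hexp' q hq]
  -- γ * γ' is central
  have hcomm : ∀ x, (γ * γ') * x = x * (γ * γ') := by
    intro x
    have h1 : γ * x * γ = γ' * x * γ' := by rw [← hγf x, hγ'f x]
    calc (γ * γ') * x = γ * (γ' * x * γ') * γ' := by
          rw [show γ * (γ' * x * γ') * γ' = (γ * γ' * x) * (γ' * γ') from by noncomm_ring,
            hγ'2, mul_one]
    _ = γ * (γ * x * γ) * γ' := by rw [h1]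
    _ = x * (γ * γ') := by
          rw [show γ * (γ * x * γ) * γ' = (γ * γ) * x * (γ * γ') from by noncomm_ring,
            hγ2, one_mul]
  obtain ⟨c₀, hc₀⟩ := central_scalar hcomm
  have hγc : γ = c₀ • γ' := by
    calc γ = (γ * γ') * γ' := by
          rw [mul_assoc, hγ'2, mul_one]
    _ = c₀ • γ' := by rw [hc₀, smul_mul_assoc, one_mul]
  have hc₀2 : c₀ * c₀ = 1 := by
    have h1 : (c₀ * c₀) • (1 : Matrix (Fin n) (Fin n) ℂ) = 1 := by
      calc (c₀ * c₀) • (1 : Matrix (Fin n) (Fin n) ℂ) = (c₀ * c₀) • (γ' * γ') := by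
            rw [hγ'2]
      _ = (c₀ • γ') * (c₀ • γ') := by rw [smul_mul_assoc, mul_smul_comm, smul_smul]
      _ = γ * γ := by rw [← hγc]
      _ = 1 := hγ2
    have h2 := congrFun (congrFun h1 ⟨0, hn⟩) ⟨0, hn⟩
    simpa [Matrix.one_apply] using h2
  have hc₀pm : c₀ = 1 ∨ c₀ = -1 := by
    have h0 : (c₀ - 1) * (c₀ + 1) = 0 := by linear_combination hc₀2
    rcases mul_eq_zero.mp h0 with h | h
    · left; exact sub_eq_zero.mp h
    · right; exact eq_neg_of_add_eq_zero_left h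
  have hmemb : γ ∈ B ∨ ∃ b ∈ B, γ = Complex.I • b := by
    rcases hc₀pm with h | h
    · -- γ = γ', hence c = 0
      rw [h, one_smul] at hγc
      have hc0 : c = 0 := by
        have h2 : b + Complex.I • c = b - Complex.I • c := by rw [← hγbc, hγc, hγ']
        have hy : Complex.I • c + Complex.I • c = 0 := by
          have h6 := sub_eq_zero.mpr h2
          rw [show b + Complex.I • c - (b - Complex.I • c)
            = Complex.I • c + Complex.I • c from by module] at h6
          exact h6
        have h4 : (2 : ℂ) • (Complex.I • c) = 0 := by
          rw [two_smul]; exact hy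
        have h5 : Complex.I • c = 0 := by
          rcases smul_eq_zero.mp h4 with h' | h'
          · exact absurd h' two_ne_zero
          · exact h'
        rcases smul_eq_zero.mp h5 with h' | h'
        · exact absurd h' Complex.I_ne_zero
        · exact h'
      left
      rw [hγbc, hc0, smul_zero, add_zero]; exact hb
    · -- γ = -γ', hence b = 0
      rw [h, neg_one_smul] at hγc
      have hb0 : b = 0 := by
        have h2 : b + Complex.I • c = -(b - Complex.I • c) := by rw [← hγbc, hγc, hγ']
        have h3 : b + b = 0 := by
          have := sub_eq_zero.mpr h2
          rw [show b + Complex.I • c - -(b - Complex.I • c) = b + b from by module] at this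
          exact this
        have h4 : (2 : ℂ) • b = 0 := by rw [two_smul]; exact h3
        rcases smul_eq_zero.mp h4 with h' | h'
        · exact absurd h' two_ne_zero
        · exact h'
      right
      exact ⟨c, hc, by rw [hγbc, hb0, zero_add]⟩
  exact ⟨γ, hγH, hγ2, hmemb, fun a _ => hγf a⟩
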